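/- For every partition λ of 2n of the form 2μ where μ is a partition of n whose largest part exceeds n/2, the content sum p_1(2μ) is strictly greater than n^2/4. -/

import Mathlib

/-- The sum of contents `j - i` (0-indexed) over the cells of the Young diagram whose
row lengths are given by the list `L`. -/
def contentSum (L : List ℕ) : ℤ :=
  ∑ i ∈ Finset.range L.length, ∑ j ∈ Finset.range (L.getD i 0), ((j : ℤ) - (i : ℤ))

/-- Weighted sum `∑ i * L_i`. -/
def wsum : List ℕ → ℕ
  | [] => 0
  | _ :: r => r.sum + wsum r

/-- Sum of squares of entries. -/
def sqs (l : List ℕ) : ℕ := (l.map (fun x => x * x)).sum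

lemma sqs_nil : sqs [] = 0 := rfl
lemma sqs_cons (x : ℕ) (r : List ℕ) : sqs (x :: r) = x * x + sqs r := by
  simp [sqs]

lemma gauss (x : ℕ) : (∑ j ∈ Finset.range x, (j : ℤ)) * 2 = x * x - x := by
  induction x with
  | zero => simp
  | succ m ih =>
      rw [Finset.sum_range_succ]
      push_cast
      push_cast at ih
      linarith

lemma sumGetD (r : List ℕ) :
    ∑ i ∈ Finset.range r.length, (r.getD i 0 : ℤ) = (r.sum : ℤ) := by
  induction r with
  | nil => simp
  | cons x r ih =>
      rw [List.length_cons, Finset.sum_range_succ']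
      simp only [List.getD_cons_succ, List.getD_cons_zero, ih]
      rw [List.sum_cons, Nat.cast_add]
      ring

lemma contentSum_cons (x : ℕ) (r : List ℕ) :
    contentSum (x :: r) = (∑ j ∈ Finset.range x, (j : ℤ)) + contentSum r - r.sum := by
  unfold contentSum
  rw [List.length_cons, Finset.sum_range_succ']
  simp only [List.getD_cons_succ, List.getD_cons_zero, Nat.cast_zero, sub_zero,
    Nat.cast_succ, Nat.cast_add, Nat.cast_one]
  have h1 : ∀ i ∈ Finset.range r.length,
      (∑ j ∈ Finset.range (r.getD i 0), ((j : ℤ) - ((i : ℤ) + 1)))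
        = (∑ j ∈ Finset.range (r.getD i 0), ((j : ℤ) - (i : ℤ))) - (r.getD i 0 : ℤ) := by
    intro i _
    rw [Finset.sum_sub_distrib, Finset.sum_sub_distrib]
    simp
    ring
  rw [Finset.sum_congr rfl h1, Finset.sum_sub_distrib, sumGetD]
  ring

lemma key (l : List ℕ) :
    2 * contentSum l = (sqs l : ℤ) - (l.sum : ℤ) - 2 * (wsum l : ℤ) := by
  induction l with
  | nil => simp [contentSum, sqs, wsum]
  | cons x r ih =>
      rw [contentSum_cons, sqs_cons]
      have hg := gauss x
      have hw : wsum (x :: r) = r.sum + wsum r := rfl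
      rw [hw]
      simp only [List.sum_cons, Nat.cast_add, Nat.cast_mul]
      linarith [ih, hg]

lemma lemB : ∀ l : List ℕ, (∀ x ∈ l, 2 ≤ x) →
    4 * wsum l + sqs l ≤ l.sum * l.sum := by
  intro l
  induction l with
  | nil => intro _; simp [wsum, sqs]
  | cons x r ih =>
      intro h
      have hx : 2 ≤ x := h x (by simp)
      have hr := ih (fun y hy => h y (by simp [hy]))
      have hw : wsum (x :: r) = r.sum + wsum r := rfl
      rw [hw, sqs_cons, List.sum_cons]
      nlinarith [Nat.zero_le r.sum, Nat.zero_le (wsum r)]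

lemma lemC : ∀ l : List ℕ, (∀ x ∈ l, 2 ≤ x) → 2 * l.sum ≤ sqs l := by
  intro l
  induction l with
  | nil => intro _; simp [sqs]
  | cons x r ih =>
      intro h
      have hx : 2 ≤ x := h x (by simp)
      have hr := ih (fun y hy => h y (by simp [hy]))
      rw [sqs_cons, List.sum_cons]
      nlinarith

/-- If `μ ⊢ n` has largest part exceeding `n/2`, then the content sum of the Young diagram
of `2μ` is strictly greater than `n²/4`. -/
theorem contentSum_gt_of_large_part (n : ℕ) (μ : Nat.Partition n)
    (h : ∃ a ∈ μ.parts, (n : ℚ) / 2 < (a : ℚ)) :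
    ((n : ℚ) ^ 2) / 4
      < ((contentSum (((μ.parts.map (fun a => 2 * a)).sort (· ≤ ·)).reverse) : ℤ) : ℚ) := by
  obtain ⟨a, ha, hna⟩ := h
  set L : List ℕ := ((μ.parts.map (fun a => 2 * a)).sort (· ≤ ·)).reverse with hL
  have hmem : ∀ x, x ∈ L ↔ x ∈ μ.parts.map (fun a => 2 * a) := by
    intro x
    rw [hL, List.mem_reverse, Multiset.mem_sort]
  -- sum of L
  have hsumL : L.sum = 2 * n := by
    rw [hL, List.sum_reverse]
    have h1 : ((μ.parts.map (fun a => 2 * a)).sort (· ≤ ·) : Multiset ℕ)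
        = μ.parts.map (fun a => 2 * a) := Multiset.sort_eq _ _
    have h2 := congrArg Multiset.sum h1
    rw [Multiset.sum_coe] at h2
    rw [h2, Multiset.sum_map_mul_left]
    simp [μ.parts_sum]
  -- every entry is ≥ 2
  have hpos : ∀ x ∈ L, 2 ≤ x := by
    intro x hx
    rw [hmem] at hx
    obtain ⟨b, hb, rfl⟩ := Multiset.mem_map.mp hx
    have := μ.parts_pos hb
    omega
  -- 2a ∈ L
  have h2a : 2 * a ∈ L := by
    rw [hmem]
    exact Multiset.mem_map.mpr ⟨a, ha, rfl⟩
  -- L sorted descending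
  have hsorted : L.Pairwise (· ≥ ·) := by
    rw [hL]
    have hs := Multiset.pairwise_sort (μ.parts.map (fun a => 2 * a)) (· ≤ ·)
    exact List.pairwise_reverse.mpr (hs.imp (fun h => h))
  -- n < 2a
  have hn2a : n < 2 * a := by
    have : (n : ℚ) < 2 * a := by linarith
    exact_mod_cast this
  -- L is nonempty
  obtain ⟨hd, t, hcons⟩ : ∃ hd t, L = hd :: t := by
    cases hL' : L with
    | nil => rw [hL'] at h2a; simp at h2a
    | cons y r => exact ⟨y, r, rfl⟩
  rw [hcons] at h2a hsorted hpos hsumL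
  -- head dominates
  have hhd : 2 * a ≤ hd := by
    rcases List.mem_cons.mp h2a with h' | h'
    · omega
    · exact List.rel_of_pairwise_cons hsorted h'
  have hhd2 : n < hd := by omega
  have hsum' : hd + t.sum = 2 * n := by
    rw [List.sum_cons] at hsumL; omega
  have htpos : ∀ x ∈ t, 2 ≤ x := fun x hx => hpos x (by simp [hx])
  have hB := lemB t htpos
  have hC := lemC t htpos
  have hkey := key (hd :: t)
  rw [sqs_cons, List.sum_cons] at hkey
  have hw : wsum (hd :: t) = t.sum + wsum t := rfl
  rw [hw] at hkey
  -- main integer inequality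
  have hmain : (n : ℤ) ^ 2 < 4 * contentSum (hd :: t) := by
    have hB' : (4 * wsum t + sqs t : ℤ) ≤ (t.sum : ℤ) * t.sum := by exact_mod_cast hB
    have hC' : (2 * t.sum : ℤ) ≤ (sqs t : ℤ) := by exact_mod_cast hC
    have hsum'' : (hd : ℤ) + t.sum = 2 * n := by exact_mod_cast hsum'
    have hhd' : (n : ℤ) + 1 ≤ (hd : ℤ) := by exact_mod_cast hhd2
    have hSt : ((t.sum : ℕ) : ℤ) = 2 * n - hd := by linarith
    simp only [Nat.cast_add, Nat.cast_mul] at hkey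
    rw [hSt] at hB' hC' hkey
    nlinarith [mul_nonneg (by linarith : (0:ℤ) ≤ (hd : ℤ) - n - 1)
        (by positivity : (0:ℤ) ≤ (hd : ℤ) + 5 * n + 1),
      Int.natCast_nonneg (wsum t), Int.natCast_nonneg (sqs t)]
  rw [hcons]
  have : (n : ℚ) ^ 2 < 4 * (contentSum (hd :: t) : ℚ) := by exact_mod_cast hmain
  linarith
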